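/- Let d ≥ 1, g_x ∈ ℝ^d, α > 0, let F_S be a d×d real symmetric positive semidefinite matrix with α‖F_S‖ ≤ ρ < 1, set A = αF_S, Σ = g_xᵀ F_S g_x, D_x = 1 + α‖g_x‖², and u = (−α²Σ + α ∑_{m=2}^{∞} (−1)^m g_xᵀ A^m g_x)/D_x. Then |u| ≤ α²Σ/((1−ρ) D_x); and if moreover ‖g_x‖ ≤ G_max, then |u| ≤ α G_max² ρ/(1−ρ). -/

import Mathlib

open Matrix

/-- Operator (spectral) norm of a matrix, as the norm of the induced map on
Euclidean space. -/
noncomputable def matOpNorm {d : ℕ} (A : Matrix (Fin d) (Fin d) ℝ) : ℝ :=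
  ‖Matrix.toEuclideanCLM (𝕜 := ℝ) A‖

set_option maxHeartbeats 1000000
set_option synthInstance.maxHeartbeats 400000

open Matrix


private lemma dot_eq_inner' {d : ℕ} (M : Matrix (Fin d) (Fin d) ℝ) (x y : Fin d → ℝ) :
    x ⬝ᵥ (M *ᵥ y) = inner ℝ ((WithLp.equiv 2 (Fin d → ℝ)).symm x)
      (toEuclideanCLM (𝕜 := ℝ) M ((WithLp.equiv 2 (Fin d → ℝ)).symm y)) := by
  rw [WithLp.equiv_symm_apply, Matrix.inner_toEuclideanCLM]

private lemma dot_self_eq_norm_sq {d : ℕ} (x : Fin d → ℝ) :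
    x ⬝ᵥ x = ‖(WithLp.equiv 2 (Fin d → ℝ)).symm x‖ ^ 2 := by
  have h := dot_eq_inner' (1 : Matrix (Fin d) (Fin d) ℝ) x x
  simp only [Matrix.one_mulVec, _root_.map_one, ContinuousLinearMap.one_apply] at h
  rw [h]
  exact real_inner_self_eq_norm_sq _

private lemma abs_dot_mulVec_le {d : ℕ} (M : Matrix (Fin d) (Fin d) ℝ) (x : Fin d → ℝ) :
    |x ⬝ᵥ (M *ᵥ x)| ≤ matOpNorm M * (x ⬝ᵥ x) := by
  rw [dot_eq_inner', dot_self_eq_norm_sq]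
  set e := (WithLp.equiv 2 (Fin d → ℝ)).symm x
  set T := toEuclideanCLM (𝕜 := ℝ) M
  calc |inner ℝ e (T e)| ≤ ‖e‖ * ‖T e‖ := abs_real_inner_le_norm _ _
    _ ≤ ‖e‖ * (‖T‖ * ‖e‖) := mul_le_mul_of_nonneg_left (T.le_opNorm e) (norm_nonneg _)
    _ = ‖T‖ * ‖e‖ ^ 2 := by ring

set_option maxHeartbeats 1000000 in
private lemma matOpNorm_pow_le {d : ℕ} (M : Matrix (Fin d) (Fin d) ℝ) (k : ℕ) :
    matOpNorm (M ^ k) ≤ matOpNorm M ^ k := by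
  unfold matOpNorm
  rw [map_pow]
  set T := toEuclideanCLM (𝕜 := ℝ) M
  induction k with
  | zero =>
    rw [pow_zero, pow_zero, ContinuousLinearMap.one_def]
    exact ContinuousLinearMap.norm_id_le
  | succ n ih =>
    calc ‖T ^ (n+1)‖ = ‖T ^ n * T‖ := by rw [pow_succ]
      _ ≤ ‖T ^ n‖ * ‖T‖ := norm_mul_le _ _
      _ ≤ ‖T‖ ^ n * ‖T‖ := mul_le_mul_of_nonneg_right ih (norm_nonneg _)
      _ = ‖T‖ ^ (n+1) := (pow_succ _ _).symm

private lemma dot_mulVec_nonneg {d : ℕ} {M : Matrix (Fin d) (Fin d) ℝ} (hM : M.PosSemidef)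
    (x : Fin d → ℝ) : 0 ≤ x ⬝ᵥ (M *ᵥ x) := by
  simpa using hM.dotProduct_mulVec_nonneg x

open scoped MatrixOrder in
private lemma pow_dot_le {d : ℕ} {A : Matrix (Fin d) (Fin d) ℝ} (hA : A.PosSemidef)
    (x : Fin d → ℝ) (k : ℕ) :
    |x ⬝ᵥ (A ^ (k + 1) *ᵥ x)| ≤ matOpNorm A ^ k * (x ⬝ᵥ (A *ᵥ x)) := by
  set S := CFC.sqrt A with hSdef
  have hS : S * S = A := CFC.sqrt_mul_sqrt_self A hA.nonneg
  have hSym : Sᵀ = S := by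
    rw [← Matrix.conjTranspose_eq_transpose_of_trivial]
    exact (CFC.sqrt_nonneg A).posSemidef.1
  have hpow : A ^ (k + 1) = S * (A ^ k * S) := by
    rw [← hS, ← pow_two, ← pow_mul, ← pow_mul, ← pow_succ, ← pow_succ']
    ring_nf
  set w := S *ᵥ x with hw
  have hws : x ᵥ* S = w := by rw [← hSym, Matrix.vecMul_transpose]
  have h1 : x ⬝ᵥ (A ^ (k + 1) *ᵥ x) = w ⬝ᵥ (A ^ k *ᵥ w) := by
    rw [hpow, ← Matrix.mulVec_mulVec, ← Matrix.mulVec_mulVec,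
      Matrix.dotProduct_mulVec, hws]
  have h2 : x ⬝ᵥ (A *ᵥ x) = w ⬝ᵥ w := by
    rw [← hS, ← Matrix.mulVec_mulVec, Matrix.dotProduct_mulVec, hws]
  rw [h1, h2]
  calc |w ⬝ᵥ (A ^ k *ᵥ w)| ≤ matOpNorm (A ^ k) * (w ⬝ᵥ w) := abs_dot_mulVec_le _ _
    _ ≤ matOpNorm A ^ k * (w ⬝ᵥ w) := by
        apply mul_le_mul_of_nonneg_right (matOpNorm_pow_le _ _)
        rw [← h2]; exact dot_mulVec_nonneg hA x

private lemma matOpNorm_smul {d : ℕ} (a : ℝ) (M : Matrix (Fin d) (Fin d) ℝ) :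
    matOpNorm (a • M) = |a| * matOpNorm M := by
  unfold matOpNorm
  rw [_root_.map_smul]
  rw [show |a| = ‖a‖ from (Real.norm_eq_abs a).symm]
  exact norm_smul a (toEuclideanCLM (𝕜 := ℝ) M)

private lemma posSemidef_smul' {d : ℕ} {M : Matrix (Fin d) (Fin d) ℝ} (hM : M.PosSemidef)
    {a : ℝ} (ha : 0 ≤ a) : (a • M).PosSemidef := by
  exact hM.smul ha

/-- With `A = α F_S`, `Σ = gₓᵀ F_S gₓ`, `Dₓ = 1 + α ‖gₓ‖²`, and
`u = (−α²Σ + α ∑_{m=2}^∞ (−1)^m gₓᵀ Aᵐ gₓ)/Dₓ`, one has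
`|u| ≤ α²Σ/((1−ρ) Dₓ)`; and if moreover `‖gₓ‖ ≤ G_max`, then
`|u| ≤ α G_max² ρ/(1−ρ)`. -/
theorem neumann_u_bound
    {d : ℕ} (hd : 1 ≤ d) (gx : Fin d → ℝ) (α : ℝ) (hα : 0 < α)
    (FS : Matrix (Fin d) (Fin d) ℝ) (hFS : FS.PosSemidef)
    (ρ : ℝ) (hρ1 : ρ < 1) (hAρ : α * matOpNorm FS ≤ ρ) :
    |(-α ^ 2 * (gx ⬝ᵥ (FS *ᵥ gx)) +
        α * ∑' n : ℕ, ((-1 : ℝ) ^ (n + 2)) * (gx ⬝ᵥ (((α • FS) ^ (n + 2)) *ᵥ gx))) /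
        (1 + α * (gx ⬝ᵥ gx))| ≤
      α ^ 2 * (gx ⬝ᵥ (FS *ᵥ gx)) / ((1 - ρ) * (1 + α * (gx ⬝ᵥ gx))) ∧
    ∀ Gmax : ℝ, Real.sqrt (gx ⬝ᵥ gx) ≤ Gmax →
      |(-α ^ 2 * (gx ⬝ᵥ (FS *ᵥ gx)) +
          α * ∑' n : ℕ, ((-1 : ℝ) ^ (n + 2)) * (gx ⬝ᵥ (((α • FS) ^ (n + 2)) *ᵥ gx))) /
          (1 + α * (gx ⬝ᵥ gx))| ≤
        α * Gmax ^ 2 * ρ / (1 - ρ) := by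
  have hρ0 : 0 ≤ ρ := le_trans (mul_nonneg hα.le (norm_nonneg _)) hAρ
  have h1ρ : 0 < 1 - ρ := by linarith
  set A := α • FS with hAdef
  have hA : A.PosSemidef := posSemidef_smul' hFS hα.le
  have hAn : matOpNorm A ≤ ρ := by
    rw [hAdef, matOpNorm_smul, abs_of_pos hα]; exact hAρ
  have hAn0 : 0 ≤ matOpNorm A := norm_nonneg _
  set Sig := gx ⬝ᵥ (FS *ᵥ gx) with hSigdef
  set c := gx ⬝ᵥ (A *ᵥ gx) with hcdef
  have hc : c = α * Sig := by
    rw [hcdef, hAdef, Matrix.smul_mulVec, dotProduct_smul, smul_eq_mul]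
  have hc0 : 0 ≤ c := dot_mulVec_nonneg hA gx
  have hSig0 : 0 ≤ Sig := dot_mulVec_nonneg hFS gx
  have hgg : 0 ≤ gx ⬝ᵥ gx := by rw [dot_self_eq_norm_sq]; positivity
  set D := 1 + α * (gx ⬝ᵥ gx) with hDdef
  have hD1 : 1 ≤ D := by nlinarith
  have hD0 : 0 < D := lt_of_lt_of_le one_pos hD1
  set f : ℕ → ℝ := fun n => ((-1 : ℝ) ^ (n + 2)) * (gx ⬝ᵥ ((A ^ (n + 2)) *ᵥ gx)) with hfdef
  have hfb : ∀ n, |f n| ≤ (c * ρ) * ρ ^ n := by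
    intro n
    rw [hfdef]
    simp only [abs_mul, abs_pow, abs_neg, abs_one, one_pow, one_mul]
    calc |gx ⬝ᵥ ((A ^ (n + 2)) *ᵥ gx)| ≤ matOpNorm A ^ (n + 1) * c := pow_dot_le hA gx (n + 1)
      _ ≤ ρ ^ (n + 1) * c := mul_le_mul_of_nonneg_right (pow_le_pow_left₀ hAn0 hAn _) hc0
      _ = (c * ρ) * ρ ^ n := by ring
  have hgs : Summable (fun n : ℕ => (c * ρ) * ρ ^ n) :=
    (summable_geometric_of_lt_one hρ0 hρ1).mul_left _
  have habs : Summable (fun n => |f n|) :=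
    Summable.of_nonneg_of_le (fun n => abs_nonneg _) hfb hgs
  have hf : Summable f := habs.of_abs
  have htsum : |∑' n, f n| ≤ c * ρ * (1 - ρ)⁻¹ := by
    calc |∑' n, f n| ≤ ∑' n, |f n| := by
          have h1 : Summable fun n => ‖f n‖ := by simpa [Real.norm_eq_abs] using habs
          simpa [Real.norm_eq_abs] using norm_tsum_le_tsum_norm h1
      _ ≤ ∑' n : ℕ, (c * ρ) * ρ ^ n := Summable.tsum_le_tsum hfb habs hgs
      _ = c * ρ * (1 - ρ)⁻¹ := by
          rw [tsum_mul_left, tsum_geometric_of_lt_one hρ0 hρ1]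
  have hN : |(-α ^ 2 * Sig + α * ∑' n, f n)| ≤ α ^ 2 * Sig / (1 - ρ) := by
    calc |(-α ^ 2 * Sig + α * ∑' n, f n)| ≤ |(-α ^ 2 * Sig)| + |α * ∑' n, f n| := abs_add_le _ _
      _ ≤ α ^ 2 * Sig + α * (c * ρ * (1 - ρ)⁻¹) := by
          apply add_le_add
          · rw [abs_of_nonpos (by nlinarith), neg_mul, neg_neg]
          · rw [abs_mul, abs_of_pos hα]
            exact mul_le_mul_of_nonneg_left htsum hα.le
      _ = α ^ 2 * Sig / (1 - ρ) := by
          rw [hc]; field_simp; ring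
  have part1 : |(-α ^ 2 * Sig + α * ∑' n, f n) / D| ≤ α ^ 2 * Sig / ((1 - ρ) * D) := by
    rw [abs_div, abs_of_pos hD0, ← div_div]
    exact (div_le_div_iff_of_pos_right hD0).mpr hN
  refine ⟨part1, ?_⟩
  intro Gmax hG
  have hG0 : 0 ≤ Gmax := le_trans (Real.sqrt_nonneg _) hG
  have hgg2 : gx ⬝ᵥ gx ≤ Gmax ^ 2 := by
    nlinarith [Real.sq_sqrt hgg, Real.sqrt_nonneg (gx ⬝ᵥ gx)]
  have hcρ : c ≤ ρ * Gmax ^ 2 := by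
    calc c ≤ |c| := le_abs_self _
      _ ≤ matOpNorm A * (gx ⬝ᵥ gx) := abs_dot_mulVec_le _ _
      _ ≤ ρ * Gmax ^ 2 := mul_le_mul hAn hgg2 hgg hρ0
  refine le_trans part1 ?_
  have hnum : α ^ 2 * Sig ≤ α * (ρ * Gmax ^ 2) := by
    have h := mul_le_mul_of_nonneg_left hcρ hα.le
    rw [hc] at h
    nlinarith
  have key : α ^ 2 * Sig / ((1 - ρ) * D) ≤ (α * (ρ * Gmax ^ 2)) / ((1 - ρ) * 1) := by
    apply div_le_div₀ (by positivity) hnum (by nlinarith) (by nlinarith)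
  calc α ^ 2 * Sig / ((1 - ρ) * D) ≤ (α * (ρ * Gmax ^ 2)) / ((1 - ρ) * 1) := key
    _ = α * Gmax ^ 2 * ρ / (1 - ρ) := by ring
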